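/- For every real number d > 0 and every λ > 0, (1 + 2d²λ²) · exp(d²λ²) · ∫_{dλ}^∞ exp(-t²) dt > dλ. Consequently, the function λ ↦ λ · exp(d²λ²) · ∫_{dλ}^∞ exp(-t²) dt is strictly increasing on (0, ∞). -/

import Mathlib

open MeasureTheory Set Filter Real

lemma expsq_intOn (x : ℝ) : IntegrableOn (fun t : ℝ => Real.exp (-t ^ 2)) (Set.Ioi x) := by
  have h := (integrable_exp_neg_mul_sq (one_pos)).integrableOn (s := Set.Ioi x)
  simpa using h

lemma hasDerivAt_F (t : ℝ) :
    HasDerivAt (fun t : ℝ => -t * Real.exp (-t ^ 2) / (1 + 2 * t ^ 2))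
      (Real.exp (-t ^ 2) * (4 * t ^ 2 + 4 * t ^ 4 - 1) / (1 + 2 * t ^ 2) ^ 2) t := by
  have hden : (1 + 2 * t ^ 2) ≠ 0 := by positivity
  have h1 : HasDerivAt (fun t : ℝ => Real.exp (-t ^ 2)) (Real.exp (-t ^ 2) * (-(2 * t))) t := by
    have := ((hasDerivAt_pow 2 t).neg).exp
    simpa using this
  have h2 : HasDerivAt (fun t : ℝ => -t * Real.exp (-t ^ 2))
      (-1 * Real.exp (-t ^ 2) + -t * (Real.exp (-t ^ 2) * (-(2 * t)))) t :=
    ((hasDerivAt_id t).neg).mul h1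
  have h3 : HasDerivAt (fun t : ℝ => 1 + 2 * t ^ 2) (2 * (2 * t)) t := by
    simpa using ((hasDerivAt_pow 2 t).const_mul 2).const_add 1
  have := h2.div h3 hden
  refine this.congr_deriv ?_
  ring

lemma tendsto_F :
    Tendsto (fun t : ℝ => -t * Real.exp (-t ^ 2) / (1 + 2 * t ^ 2)) atTop (nhds 0) := by
  have hb : Tendsto (fun t : ℝ => t * Real.exp (-t)) atTop (nhds 0) := by
    simpa using tendsto_pow_mul_exp_neg_atTop_nhds_zero 1
  have hnb : Tendsto (fun t : ℝ => -(t * Real.exp (-t))) atTop (nhds 0) := by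
    simpa using hb.neg
  refine tendsto_of_tendsto_of_tendsto_of_le_of_le' hnb hb ?_ ?_
  · filter_upwards [eventually_ge_atTop (1 : ℝ)] with t ht
    have he : Real.exp (-t ^ 2) ≤ Real.exp (-t) := by
      apply Real.exp_le_exp.2; nlinarith
    have hep : (0:ℝ) < Real.exp (-t ^ 2) := Real.exp_pos _
    have hden : (1:ℝ) ≤ 1 + 2 * t ^ 2 := by nlinarith
    have h1 : t * Real.exp (-t ^ 2) / (1 + 2 * t ^ 2) ≤ t * Real.exp (-t) := by
      rw [div_le_iff₀ (by positivity)]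
      nlinarith [mul_le_mul_of_nonneg_left he (by linarith : (0:ℝ) ≤ t),
        Real.exp_pos (-t), sq_nonneg t, mul_pos (by linarith : (0:ℝ) < t) (Real.exp_pos (-t))]
    have heq : -t * Real.exp (-t ^ 2) / (1 + 2 * t ^ 2)
        = -(t * Real.exp (-t ^ 2) / (1 + 2 * t ^ 2)) := by ring
    rw [heq]
    linarith
  · filter_upwards [eventually_ge_atTop (1 : ℝ)] with t ht
    have hep : (0:ℝ) < Real.exp (-t ^ 2) := Real.exp_pos _
    have h0 : -t * Real.exp (-t ^ 2) / (1 + 2 * t ^ 2) ≤ 0 := by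
      apply div_nonpos_of_nonpos_of_nonneg <;> nlinarith
    have : 0 ≤ t * Real.exp (-t) := by positivity
    linarith

lemma Fint (x : ℝ) : IntegrableOn
    (fun t : ℝ => Real.exp (-t ^ 2) * (4 * t ^ 2 + 4 * t ^ 4 - 1) / (1 + 2 * t ^ 2) ^ 2)
    (Set.Ioi x) := by
  refine Integrable.mono (expsq_intOn x) ?_ ?_
  · apply Measurable.aestronglyMeasurable
    fun_prop
  · refine Filter.Eventually.of_forall fun t => ?_
    have hep : (0:ℝ) < Real.exp (-t ^ 2) := Real.exp_pos _
    have hden : (0:ℝ) < (1 + 2 * t ^ 2) ^ 2 := by positivity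
    rw [Real.norm_eq_abs, Real.norm_eq_abs, abs_of_pos hep, abs_div, abs_of_pos hden,
      div_le_iff₀ hden, abs_mul, abs_of_pos hep]
    have h1 : |4 * t ^ 2 + 4 * t ^ 4 - 1| ≤ (1 + 2 * t ^ 2) ^ 2 := by
      rw [abs_le]; constructor <;> nlinarith [sq_nonneg t, sq_nonneg (t^2)]
    calc Real.exp (-t ^ 2) * |4 * t ^ 2 + 4 * t ^ 4 - 1|
        ≤ Real.exp (-t ^ 2) * (1 + 2 * t ^ 2) ^ 2 := by
          exact mul_le_mul_of_nonneg_left h1 hep.le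
      _ = _ := by ring

lemma key (x : ℝ) (hx : 0 < x) :
    x * Real.exp (-x ^ 2) / (1 + 2 * x ^ 2) < ∫ t in Set.Ioi x, Real.exp (-t ^ 2) := by
  have hFeq : (∫ t in Set.Ioi x,
      Real.exp (-t ^ 2) * (4 * t ^ 2 + 4 * t ^ 4 - 1) / (1 + 2 * t ^ 2) ^ 2)
      = x * Real.exp (-x ^ 2) / (1 + 2 * x ^ 2) := by
    have := integral_Ioi_of_hasDerivAt_of_tendsto
      (f := fun t : ℝ => -t * Real.exp (-t ^ 2) / (1 + 2 * t ^ 2))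
      (f' := fun t : ℝ => Real.exp (-t ^ 2) * (4 * t ^ 2 + 4 * t ^ 4 - 1) / (1 + 2 * t ^ 2) ^ 2)
      (a := x) (m := 0)
      (hasDerivAt_F x).continuousAt.continuousWithinAt
      (fun t _ => hasDerivAt_F t) (Fint x) tendsto_F
    rw [this]; ring
  have hpos : 0 < ∫ t in Set.Ioi x,
      (Real.exp (-t ^ 2) - Real.exp (-t ^ 2) * (4 * t ^ 2 + 4 * t ^ 4 - 1) / (1 + 2 * t ^ 2) ^ 2) := by
    have hint : IntegrableOn
        (fun t : ℝ => Real.exp (-t ^ 2) - Real.exp (-t ^ 2) * (4 * t ^ 2 + 4 * t ^ 4 - 1) / (1 + 2 * t ^ 2) ^ 2)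
        (Set.Ioi x) := (expsq_intOn x).sub (Fint x)
    have hptwise : ∀ t : ℝ, 0 < Real.exp (-t ^ 2) - Real.exp (-t ^ 2) * (4 * t ^ 2 + 4 * t ^ 4 - 1) / (1 + 2 * t ^ 2) ^ 2 := by
      intro t
      have hep : (0:ℝ) < Real.exp (-t ^ 2) := Real.exp_pos _
      have hden : (0:ℝ) < (1 + 2 * t ^ 2) ^ 2 := by positivity
      rw [sub_pos, div_lt_iff₀ hden]
      nlinarith [sq_nonneg t, sq_nonneg (t^2)]
    rw [setIntegral_pos_iff_support_of_nonneg_ae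
      (Filter.Eventually.of_forall fun t => (hptwise t).le) hint]
    have hsup : Function.support (fun t : ℝ => Real.exp (-t ^ 2) - Real.exp (-t ^ 2) * (4 * t ^ 2 + 4 * t ^ 4 - 1) / (1 + 2 * t ^ 2) ^ 2) = Set.univ := by
      ext t; simp [Function.mem_support, (hptwise t).ne']
    rw [hsup, Set.univ_inter]
    simp [Real.volume_Ioi]
  have hsub := integral_sub (expsq_intOn x) (Fint x)
  rw [hsub, hFeq] at hpos
  linarith

lemma G_eq (y : ℝ) (hy : 0 < y) :
    (∫ t in Set.Ioi y, Real.exp (-t ^ 2))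
      = (∫ t in Set.Ioi (0:ℝ), Real.exp (-t ^ 2)) - ∫ t in (0:ℝ)..y, Real.exp (-t ^ 2) := by
  have hu : Set.Ioc (0:ℝ) y ∪ Set.Ioi y = Set.Ioi (0:ℝ) := Set.Ioc_union_Ioi_eq_Ioi hy.le
  have hsplit := setIntegral_union (f := fun t : ℝ => Real.exp (-t ^ 2)) (μ := volume)
    Set.Ioc_disjoint_Ioi_same measurableSet_Ioi
    ((expsq_intOn 0).mono_set Set.Ioc_subset_Ioi_self) (expsq_intOn y)
  rw [hu] at hsplit
  rw [intervalIntegral.integral_of_le hy.le, hsplit]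
  ring

lemma hasDerivAt_G (x : ℝ) (hx : 0 < x) :
    HasDerivAt (fun y : ℝ => ∫ t in Set.Ioi y, Real.exp (-t ^ 2)) (-Real.exp (-x ^ 2)) x := by
  have hcont : Continuous (fun t : ℝ => Real.exp (-t ^ 2)) := by fun_prop
  have h1 : HasDerivAt (fun y : ℝ => ∫ t in (0:ℝ)..y, Real.exp (-t ^ 2))
      (Real.exp (-x ^ 2)) x :=
    intervalIntegral.integral_hasDerivAt_right
      (hcont.intervalIntegrable 0 x)
      hcont.aestronglyMeasurable.stronglyMeasurableAtFilter
      hcont.continuousAt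
  have h2 : HasDerivAt (fun y : ℝ =>
      (∫ t in Set.Ioi (0:ℝ), Real.exp (-t ^ 2)) - ∫ t in (0:ℝ)..y, Real.exp (-t ^ 2))
      (-Real.exp (-x ^ 2)) x := h1.const_sub _
  refine h2.congr_of_eventuallyEq ?_
  filter_upwards [isOpen_Ioi.mem_nhds (Set.mem_Ioi.2 hx)] with y hy
  exact G_eq y hy

/-- For `d > 0` and `λ > 0`,
`(1 + 2d²λ²) exp(d²λ²) ∫_{dλ}^∞ exp(-t²) dt > dλ`; consequently
`λ ↦ λ exp(d²λ²) ∫_{dλ}^∞ exp(-t²) dt` is strictly increasing on `(0, ∞)`. -/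
theorem stmt_12 (d : ℝ) (hd : 0 < d) :
    (∀ lam : ℝ, 0 < lam →
      d * lam < (1 + 2 * d ^ 2 * lam ^ 2) * Real.exp (d ^ 2 * lam ^ 2) *
        ∫ t in Set.Ioi (d * lam), Real.exp (-t ^ 2)) ∧
    StrictMonoOn (fun lam : ℝ => lam * Real.exp (d ^ 2 * lam ^ 2) *
        ∫ t in Set.Ioi (d * lam), Real.exp (-t ^ 2)) (Set.Ioi 0) := by
  have part1 : ∀ lam : ℝ, 0 < lam →
      d * lam < (1 + 2 * d ^ 2 * lam ^ 2) * Real.exp (d ^ 2 * lam ^ 2) *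
        ∫ t in Set.Ioi (d * lam), Real.exp (-t ^ 2) := by
    intro lam hlam
    have hx : 0 < d * lam := mul_pos hd hlam
    have h := key (d * lam) hx
    have hc : (0:ℝ) < (1 + 2 * (d * lam) ^ 2) * Real.exp ((d * lam) ^ 2) := by positivity
    have h2 := mul_lt_mul_of_pos_left h hc
    have he : Real.exp ((d * lam) ^ 2) * Real.exp (-(d * lam) ^ 2) = 1 := by
      rw [← Real.exp_add]; simp
    have hden : (1 + 2 * (d * lam) ^ 2) ≠ 0 := by positivity
    have heq : (1 + 2 * (d * lam) ^ 2) * Real.exp ((d * lam) ^ 2) *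
        (d * lam * Real.exp (-(d * lam) ^ 2) / (1 + 2 * (d * lam) ^ 2)) = d * lam := by
      calc (1 + 2 * (d * lam) ^ 2) * Real.exp ((d * lam) ^ 2) *
          (d * lam * Real.exp (-(d * lam) ^ 2) / (1 + 2 * (d * lam) ^ 2))
          = (d * lam) * (Real.exp ((d * lam) ^ 2) * Real.exp (-(d * lam) ^ 2)) *
            ((1 + 2 * (d * lam) ^ 2) / (1 + 2 * (d * lam) ^ 2)) := by ring
        _ = d * lam := by rw [he, div_self hden]; ring
    rw [heq] at h2
    have hrw : (d * lam) ^ 2 = d ^ 2 * lam ^ 2 := by ring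
    rw [hrw] at h2
    calc d * lam < (1 + 2 * (d ^ 2 * lam ^ 2)) * Real.exp (d ^ 2 * lam ^ 2) *
        ∫ t in Set.Ioi (d * lam), Real.exp (-t ^ 2) := h2
      _ = _ := by ring
  refine ⟨part1, ?_⟩
  set G : ℝ → ℝ := fun y => ∫ t in Set.Ioi y, Real.exp (-t ^ 2) with hG
  have hderiv : ∀ lam : ℝ, 0 < lam →
      HasDerivAt (fun lam : ℝ => lam * Real.exp (d ^ 2 * lam ^ 2) * G (d * lam))
        ((1 + 2 * d ^ 2 * lam ^ 2) * Real.exp (d ^ 2 * lam ^ 2) * G (d * lam) - d * lam) lam := by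
    intro lam hlam
    have hx : 0 < d * lam := mul_pos hd hlam
    have hexp : HasDerivAt (fun lam : ℝ => Real.exp (d ^ 2 * lam ^ 2))
        (Real.exp (d ^ 2 * lam ^ 2) * (d ^ 2 * (2 * lam))) lam := by
      have := (((hasDerivAt_pow 2 lam).const_mul (d ^ 2)).exp)
      simpa using this
    have h1 : HasDerivAt (fun lam : ℝ => lam * Real.exp (d ^ 2 * lam ^ 2))
        (1 * Real.exp (d ^ 2 * lam ^ 2) + lam * (Real.exp (d ^ 2 * lam ^ 2) * (d ^ 2 * (2 * lam)))) lam :=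
      (hasDerivAt_id lam).mul hexp
    have h2 : HasDerivAt (fun lam : ℝ => G (d * lam)) (-Real.exp (-(d * lam) ^ 2) * (d * 1)) lam :=
      (hasDerivAt_G (d * lam) hx).comp lam ((hasDerivAt_id lam).const_mul d)
    have h3 := h1.mul h2
    refine h3.congr_deriv ?_
    have he : Real.exp (d ^ 2 * lam ^ 2) * Real.exp (-(d * lam) ^ 2) = 1 := by
      rw [← Real.exp_add]; ring_nf; simp
    linear_combination -(d * lam) * he
  refine strictMonoOn_of_hasDerivWithinAt_pos (convex_Ioi 0)
    (f' := fun x => (1 + 2 * d ^ 2 * x ^ 2) * Real.exp (d ^ 2 * x ^ 2) * G (d * x) - d * x)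
    (fun x hx => ((hderiv x hx).continuousAt.continuousWithinAt)) ?_ ?_
  · intro x hx
    rw [interior_Ioi] at hx
    exact ((hderiv x hx).hasDerivWithinAt)
  · intro x hx
    rw [interior_Ioi] at hx
    have := part1 x hx
    simp only [sub_pos]
    linarith
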